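/- For 0 ≤ k ≤ n, ∑_{j=0}^{k} (-1)^j q^{j(j+1)/2} qbinom(k,j) qbinom(n-j,k) = 1. -/

import Mathlib

open Finset

noncomputable section

abbrev K : Type := RatFunc ℚ

def q : K := RatFunc.X

def qint (a : K) (m : ℕ) : K := ∑ i ∈ range m, a ^ i

def qfact (a : K) (m : ℕ) : K := ∏ i ∈ range m, qint a (i + 1)

def qbinom (a : K) (n k : ℕ) : K :=
  if k ≤ n then qfact a n / (qfact a k * qfact a (n - k)) else 0

/-- q-Fibonacci polynomials F_n(x,s,q) with base `a`. -/
def qF (a x s : K) : ℕ → K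
  | 0 => 0
  | n + 1 => ∑ k ∈ range (n / 2 + 1),
      a ^ (k * (k + 1) / 2) * qbinom a (n - k) k * s ^ k * x ^ (n - 2 * k)

/-- q-Lucas polynomials L_n(x,s,q) with base `a` (L_0 = 2). -/
def qL (a x s : K) (n : ℕ) : K :=
  if n = 0 then 2 else
  ∑ k ∈ range (n / 2 + 1),
    a ^ (k * (k - 1) / 2) * (qint a n / qint a (n - k)) * qbinom a (n - k) k
      * s ^ k * x ^ (n - 2 * k)

/-- Starred variant: L*_0 = 1, L*_n = L_n for n > 0. -/
def qLs (a x s : K) (n : ℕ) : K := if n = 0 then 1 else qL a x s n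

/-- Rogers-Szegő polynomial. -/
def rs (a x y : K) (m : ℕ) : K := ∑ j ∈ range (m + 1), qbinom a m j * x ^ j * y ^ (m - j)

/-- q-Pochhammer (q;q)_m. -/
def qpoch (a : K) (m : ℕ) : K := ∏ j ∈ range m, (1 - a ^ (j + 1))

lemma tri (j : ℕ) : (j + 1) * j / 2 = j * (j - 1) / 2 + j := by
  cases j with
  | zero => rfl
  | succ j =>
    have h : (j + 2) * (j + 1) = (j + 1) * j + (j + 1) * 2 := by ring
    simp only [Nat.succ_sub_one]
    rw [h, Nat.add_mul_div_right _ _ (by norm_num : (0:ℕ) < 2)]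

lemma qint_add (a b : ℕ) : qint q (a + b) = qint q a + q ^ a * qint q b := by
  unfold qint
  rw [Finset.sum_range_add, Finset.mul_sum]
  simp [pow_add]

lemma qint_ne_zero {m : ℕ} (hm : 1 ≤ m) : qint q m ≠ 0 := by
  have h : qint q m = algebraMap (Polynomial ℚ) K (∑ i ∈ range m, Polynomial.X ^ i) := by
    simp [qint, q, map_sum, map_pow, RatFunc.algebraMap_X]
  rw [h]
  intro h0
  have h1 : (∑ i ∈ range m, Polynomial.X ^ i : Polynomial ℚ) = 0 :=
    RatFunc.algebraMap_injective ℚ (by simpa using h0)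
  have h2 := congrArg (Polynomial.eval (1 : ℚ)) h1
  simp [Polynomial.eval_finset_sum] at h2
  omega

lemma qfact_ne_zero (m : ℕ) : qfact q m ≠ 0 := by
  unfold qfact
  exact Finset.prod_ne_zero_iff.mpr fun i _ => qint_ne_zero (Nat.le_add_left 1 i)

lemma qbinom_of_gt {n k : ℕ} (h : n < k) : qbinom q n k = 0 := by
  simp [qbinom, Nat.not_le.mpr h]

lemma qbinom_zero_right (n : ℕ) : qbinom q n 0 = 1 := by
  simp [qbinom, qfact]
  exact qfact_ne_zero n

lemma qbinom_self (n : ℕ) : qbinom q n n = 1 := by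
  simp [qbinom, qfact]
  exact qfact_ne_zero n

lemma qfact_succ (m : ℕ) : qfact q (m + 1) = qfact q m * qint q (m + 1) := by
  simp [qfact, Finset.prod_range_succ]

lemma pascal1 (m k : ℕ) :
    qbinom q (m + 1) (k + 1) = qbinom q m k + q ^ (k + 1) * qbinom q m (k + 1) := by
  rcases Nat.lt_or_ge m k with h | h
  · rw [qbinom_of_gt (by omega), qbinom_of_gt h, qbinom_of_gt (by omega)]; ring
  rcases Nat.eq_or_lt_of_le h with rfl | h
  · rw [qbinom_self, qbinom_self, qbinom_of_gt (by omega)]; ring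
  -- k < m
  have hmk : m - k = (m - k - 1) + 1 := by omega
  have e1 : qbinom q (m + 1) (k + 1)
      = qfact q (m + 1) / (qfact q (k + 1) * qfact q (m - k)) := by
    rw [qbinom, if_pos (by omega), show m + 1 - (k + 1) = m - k from by omega]
  have e2 : qbinom q m k = qfact q m / (qfact q k * qfact q (m - k)) := by
    rw [qbinom, if_pos (by omega)]
  have e3 : qbinom q m (k + 1) = qfact q m / (qfact q (k + 1) * qfact q (m - k - 1)) := by
    rw [qbinom, if_pos (by omega), show m - (k + 1) = m - k - 1 from by omega]
  rw [e1, e2, e3, qfact_succ m, qfact_succ k,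
    show qfact q (m - k) = qfact q (m - k - 1) * qint q (m - k) by
      have h5 := qfact_succ (m - k - 1)
      rwa [show m - k - 1 + 1 = m - k from by omega] at h5,
    show qint q (m + 1) = qint q (k + 1) + q ^ (k + 1) * qint q (m - k) by
      rw [← qint_add]; congr 1; omega]
  have h1 := qfact_ne_zero k
  have h2 := qfact_ne_zero (m - k - 1)
  have h3 := qint_ne_zero (m := k + 1) (by omega)
  have h4 := qint_ne_zero (m := m - k) (by omega)
  field_simp

lemma pascal2 (m k : ℕ) :
    qbinom q (m + 1) (k + 1) = qbinom q m (k + 1) + q ^ (m - k) * qbinom q m k := by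
  rcases Nat.lt_or_ge m k with h | h
  · rw [qbinom_of_gt (by omega), qbinom_of_gt (by omega), qbinom_of_gt h]; ring
  rcases Nat.eq_or_lt_of_le h with rfl | h
  · rw [qbinom_self, qbinom_self, qbinom_of_gt (by omega)]
    simp
  have hmk : m - k = (m - k - 1) + 1 := by omega
  have e1 : qbinom q (m + 1) (k + 1)
      = qfact q (m + 1) / (qfact q (k + 1) * qfact q (m - k)) := by
    rw [qbinom, if_pos (by omega), show m + 1 - (k + 1) = m - k from by omega]
  have e2 : qbinom q m k = qfact q m / (qfact q k * qfact q (m - k)) := by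
    rw [qbinom, if_pos (by omega)]
  have e3 : qbinom q m (k + 1) = qfact q m / (qfact q (k + 1) * qfact q (m - k - 1)) := by
    rw [qbinom, if_pos (by omega), show m - (k + 1) = m - k - 1 from by omega]
  rw [e1, e2, e3, qfact_succ m, qfact_succ k,
    show qfact q (m - k) = qfact q (m - k - 1) * qint q (m - k) by
      have h5 := qfact_succ (m - k - 1)
      rwa [show m - k - 1 + 1 = m - k from by omega] at h5,
    show qint q (m + 1) = qint q (m - k) + q ^ (m - k) * qint q (k + 1) by
      rw [← qint_add]; congr 1; omega]
  have h1 := qfact_ne_zero k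
  have h2 := qfact_ne_zero (m - k - 1)
  have h3 := qint_ne_zero (m := k + 1) (by omega)
  have h4 := qint_ne_zero (m := m - k) (by omega)
  field_simp

lemma lemB (k n : ℕ) (hn : k + 1 ≤ n)
    (hA : ∀ m, k ≤ m → m ≤ n →
      ∑ j ∈ range (k + 1), (-1 : K) ^ j * q ^ (j * (j - 1) / 2) * qbinom q k j
        * qbinom q (m - j) k = q ^ (k * (m - k))) :
    ∑ j ∈ range (k + 2), (-1 : K) ^ j * q ^ (j * (j - 1) / 2) * qbinom q (k + 1) j
      * qbinom q (n - j) k = 0 := by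
  have step : ∀ j ∈ range (k + 1),
      (-1 : K) ^ (j+1) * q ^ ((j+1) * ((j+1) - 1) / 2) * qbinom q (k + 1) (j+1)
        * qbinom q (n - (j+1)) k
      = ((-1 : K) ^ (j+1) * q ^ ((j+1) * ((j+1) - 1) / 2) * qbinom q k (j+1)
          * qbinom q (n - (j+1)) k)
        - q ^ k * ((-1 : K) ^ j * q ^ (j * (j - 1) / 2) * qbinom q k j
          * qbinom q (n - 1 - j) k) := by
    intro j hj
    simp only [mem_range] at hj
    rw [pascal2 k j, show n - (j+1) = n - 1 - j from by omega]
    have hpow : q ^ ((j+1) * ((j+1) - 1) / 2) * q ^ (k - j) = q ^ k * q ^ (j * (j - 1) / 2) := by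
      rw [← pow_add, ← pow_add]
      congr 1
      simp only [Nat.add_sub_cancel]
      have := tri j
      omega
    have hneg : ((-1 : K)) ^ (j+1) = -(-1 : K) ^ j := by rw [pow_succ]; ring
    rw [hneg]
    linear_combination (-((-1:K)^j * qbinom q k j * qbinom q (n - 1 - j) k)) * hpow
  rw [Finset.sum_range_succ', Finset.sum_congr rfl step, Finset.sum_sub_distrib,
    ← Finset.mul_sum]
  have hAn1 : ∑ j ∈ range (k + 1), (-1 : K) ^ j * q ^ (j * (j - 1) / 2) * qbinom q k j
      * qbinom q (n - 1 - j) k = q ^ (k * (n - 1 - k)) := by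
    have := hA (n - 1) (by omega) (by omega)
    convert this using 2 with j hj
  rw [hAn1]
  have h0 : (-1 : K) ^ 0 * q ^ (0 * (0 - 1) / 2) * qbinom q (k + 1) 0 * qbinom q (n - 0) k
      = (-1 : K) ^ 0 * q ^ (0 * (0 - 1) / 2) * qbinom q k 0 * qbinom q (n - 0) k := by
    rw [qbinom_zero_right, qbinom_zero_right]
  rw [h0, sub_add_eq_add_sub, ← Finset.sum_range_succ'
    (fun j => (-1 : K) ^ j * q ^ (j * (j - 1) / 2) * qbinom q k j * qbinom q (n - j) k) (k + 1)]
  rw [Finset.sum_range_succ, qbinom_of_gt (by omega : k < k + 1)]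
  rw [hA n (by omega) le_rfl]
  have : q ^ k * q ^ (k * (n - 1 - k)) = q ^ (k * (n - k)) := by
    rw [← pow_add]
    congr 1
    have : n - k = (n - 1 - k) + 1 := by omega
    rw [this, Nat.mul_succ]
    omega
  rw [this]
  ring

lemma lemA : ∀ k n : ℕ, k ≤ n →
    ∑ j ∈ range (k + 1), (-1 : K) ^ j * q ^ (j * (j - 1) / 2) * qbinom q k j
      * qbinom q (n - j) k = q ^ (k * (n - k)) := by
  intro k
  induction k using Nat.strong_induction_on with
  | _ k ih =>
    intro n hkn
    induction n, hkn using Nat.le_induction with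
    | base =>
      rw [Finset.sum_eq_single_of_mem 0 (by simp)]
      · simp [qbinom_zero_right, qbinom_self]
      · intro j hj hj0
        simp only [mem_range] at hj
        rw [qbinom_of_gt (show k - j < k from by omega)]
        ring
    | succ n hkn ihn =>
      cases k with
      | zero => simp [Finset.sum_range_one, qbinom_zero_right, qbinom_self]
      | succ k' =>
        have step : ∀ j ∈ range (k' + 2),
            (-1 : K) ^ j * q ^ (j * (j - 1) / 2) * qbinom q (k' + 1) j
              * qbinom q (n + 1 - j) (k' + 1)
            = ((-1 : K) ^ j * q ^ (j * (j - 1) / 2) * qbinom q (k' + 1) j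
                * qbinom q (n - j) k')
              + q ^ (k' + 1) * ((-1 : K) ^ j * q ^ (j * (j - 1) / 2) * qbinom q (k' + 1) j
                * qbinom q (n - j) (k' + 1)) := by
          intro j hj
          simp only [mem_range] at hj
          rw [show n + 1 - j = (n - j) + 1 from by omega, pascal1 (n - j) k']
          ring
        rw [Finset.sum_congr rfl step, Finset.sum_add_distrib, ← Finset.mul_sum,
          lemB k' n hkn (fun m h1 _ => ih k' (by omega) m h1), ihn, zero_add, ← pow_add]
        congr 1
        have h1 : n + 1 - (k' + 1) = (n - (k' + 1)) + 1 := by omega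
        rw [h1, Nat.mul_succ]
        omega

theorem stmt9 (n k : ℕ) (hk : k ≤ n) :
    ∑ j ∈ range (k + 1), (-1 : K) ^ j * q ^ (j * (j + 1) / 2) * qbinom q k j
      * qbinom q (n - j) k = 1 := by
  induction n, hk using Nat.le_induction with
  | base =>
    rw [Finset.sum_eq_single_of_mem 0 (by simp)]
    · simp [qbinom_zero_right, qbinom_self]
    · intro j hj hj0
      simp only [mem_range] at hj
      rw [qbinom_of_gt (show k - j < k from by omega)]
      ring
  | succ n hkn ihn =>
    cases k with
    | zero => simp [Finset.sum_range_one, qbinom_zero_right]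
    | succ k' =>
      have step : ∀ j ∈ range (k' + 2),
          (-1 : K) ^ j * q ^ (j * (j + 1) / 2) * qbinom q (k' + 1) j
            * qbinom q (n + 1 - j) (k' + 1)
          = ((-1 : K) ^ j * q ^ (j * (j + 1) / 2) * qbinom q (k' + 1) j
              * qbinom q (n - j) (k' + 1))
            + q ^ (n - k') * ((-1 : K) ^ j * q ^ (j * (j - 1) / 2) * qbinom q (k' + 1) j
              * qbinom q (n - j) k') := by
        intro j hj
        simp only [mem_range] at hj
        rw [show n + 1 - j = (n - j) + 1 from by omega, pascal2 (n - j) k']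
        by_cases hcase : j + k' ≤ n
        · have hexp : q ^ (j * (j + 1) / 2) * q ^ (n - j - k')
              = q ^ (n - k') * q ^ (j * (j - 1) / 2) := by
            rw [← pow_add, ← pow_add]
            congr 1
            have h := tri j
            rw [Nat.mul_comm j (j + 1)]
            omega
          linear_combination ((-1 : K) ^ j * qbinom q (k' + 1) j * qbinom q (n - j) k') * hexp
        · rw [qbinom_of_gt (show n - j < k' from by omega)]
          ring
      rw [Finset.sum_congr rfl step, Finset.sum_add_distrib, ← Finset.mul_sum, ihn,
        lemB k' n hkn (fun m h1 _ => lemA k' m h1), mul_zero, add_zero]
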